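/- Let D, E be real diagonal matrices and X a rectangular complex matrix satisfying 2X − DX − XE = 0, and suppose the block matrix [[(I+D)/2, X/2],[X*/2, −(I+E)/2]] has operator norm at most 1. Then X = 0. -/

import Mathlib

lemma aux_sum {n : Type*} [Fintype n] [DecidableEq n]
    (M : Matrix n n ℂ) (hM : ‖Matrix.toEuclideanCLM (𝕜 := ℂ) M‖ ≤ 1) (p : n) :
    ∑ q, ‖M q p‖ ^ 2 ≤ 1 := by
  have h1 : Matrix.toEuclideanCLM (𝕜 := ℂ) M (EuclideanSpace.single p 1) =
      (WithLp.equiv 2 _).symm (M.mulVec (Pi.single p 1)) := by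
    rw [EuclideanSpace.single]
    exact Matrix.toEuclideanCLM_toLp M _
  have h2 : ‖Matrix.toEuclideanCLM (𝕜 := ℂ) M (EuclideanSpace.single p 1)‖ ≤ 1 := by
    calc ‖Matrix.toEuclideanCLM (𝕜 := ℂ) M (EuclideanSpace.single p 1)‖
        ≤ ‖Matrix.toEuclideanCLM (𝕜 := ℂ) M‖ * ‖(EuclideanSpace.single p 1 : EuclideanSpace ℂ n)‖ :=
          ContinuousLinearMap.le_opNorm _ _
      _ = ‖Matrix.toEuclideanCLM (𝕜 := ℂ) M‖ := by
          rw [EuclideanSpace.norm_single, norm_one, mul_one]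
      _ ≤ 1 := hM
  rw [h1, EuclideanSpace.norm_eq] at h2
  have h3 : Real.sqrt (∑ q, ‖M q p‖ ^ 2) ≤ 1 := by
    convert h2 using 3 with q
    simp [Matrix.mulVec_single]
  have h4 : (0:ℝ) ≤ ∑ q, ‖M q p‖ ^ 2 :=
    Finset.sum_nonneg fun q _ => sq_nonneg _
  nlinarith [Real.sq_sqrt h4, Real.sqrt_nonneg (∑ q, ‖M q p‖ ^ 2)]

lemma aux_entry {n : Type*} [Fintype n] [DecidableEq n]
    (M : Matrix n n ℂ) (hM : ‖Matrix.toEuclideanCLM (𝕜 := ℂ) M‖ ≤ 1) (q p : n) :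
    ‖M q p‖ ≤ 1 := by
  have h := aux_sum M hM p
  have h2 : ‖M q p‖ ^ 2 ≤ 1 :=
    le_trans (Finset.single_le_sum (fun i _ => sq_nonneg ‖M i p‖) (Finset.mem_univ q)) h
  nlinarith [norm_nonneg (M q p)]

/-- Let `D`, `E` be real diagonal matrices and `X` a rectangular complex matrix
with `2X − DX − XE = 0`. If the self-adjoint block matrix
`[[(I+D)/2, X/2],[X*/2, −(I+E)/2]]` has operator norm at most `1`, then
`X = 0`. -/
theorem stmt_18 {j k : ℕ} (d : Fin j → ℝ) (e : Fin k → ℝ)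
    (X : Matrix (Fin j) (Fin k) ℂ)
    (hcomm : (2 : ℂ) • X - (Matrix.diagonal fun i => (d i : ℂ)) * X
        - X * (Matrix.diagonal fun i => (e i : ℂ)) = 0)
    (hnorm : ‖Matrix.toEuclideanCLM (𝕜 := ℂ)
        (Matrix.fromBlocks
          ((2 : ℂ)⁻¹ • (1 + Matrix.diagonal fun i => (d i : ℂ)))
          ((2 : ℂ)⁻¹ • X)
          ((2 : ℂ)⁻¹ • X.conjTranspose)
          (-((2 : ℂ)⁻¹ • (1 + Matrix.diagonal fun i => (e i : ℂ)))))‖ ≤ 1) :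
    X = 0 := by
  set M := Matrix.fromBlocks
      ((2 : ℂ)⁻¹ • (1 + Matrix.diagonal fun i => (d i : ℂ)))
      ((2 : ℂ)⁻¹ • X)
      ((2 : ℂ)⁻¹ • X.conjTranspose)
      (-((2 : ℂ)⁻¹ • (1 + Matrix.diagonal fun i => (e i : ℂ)))) with hMdef
  ext a b
  simp only [Matrix.zero_apply]
  by_contra hx
  -- entry of the commutation relation
  have hc := congrFun (congrFun hcomm a) b
  simp only [Matrix.sub_apply, Matrix.smul_apply, Matrix.diagonal_mul, Matrix.mul_diagonal,
    Matrix.zero_apply, smul_eq_mul] at hc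
  have hfac : ((2 : ℂ) - (d a : ℂ) - (e b : ℂ)) * X a b = 0 := by linear_combination hc
  have hde : (d a : ℂ) + (e b : ℂ) = 2 := by
    rcases mul_eq_zero.mp hfac with h | h
    · linear_combination -h
    · exact absurd h hx
  have hdeR : d a + e b = 2 := by exact_mod_cast hde
  -- entry values of M
  have hMaa : M (Sum.inl a) (Sum.inl a) = 2⁻¹ * (1 + (d a : ℂ)) := by
    simp [hMdef, Matrix.fromBlocks_apply₁₁, Matrix.smul_apply, Matrix.add_apply,
      Matrix.one_apply_eq, Matrix.diagonal_apply_eq]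
    ring
  have hMbb : M (Sum.inr b) (Sum.inr b) = -(2⁻¹ * (1 + (e b : ℂ))) := by
    simp [hMdef, Matrix.fromBlocks_apply₂₂, Matrix.smul_apply, Matrix.add_apply,
      Matrix.one_apply_eq, Matrix.diagonal_apply_eq]
    ring
  have hMba : M (Sum.inr b) (Sum.inl a) = 2⁻¹ * (starRingEnd ℂ) (X a b) := by
    simp [hMdef, Matrix.fromBlocks_apply₂₁, Matrix.smul_apply, Matrix.conjTranspose_apply]
  -- bounds on d a, e b
  have hd1 : d a ≤ 1 := by
    have := aux_entry M hnorm (Sum.inl a) (Sum.inl a)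
    rw [hMaa] at this
    have h1 : ‖(2 : ℂ)⁻¹ * (1 + (d a : ℂ))‖ = 2⁻¹ * |1 + d a| := by
      rw [norm_mul]
      norm_num
      rw [show (1 : ℂ) + (d a : ℂ) = ((1 + d a : ℝ) : ℂ) by push_cast; ring]
      exact (Complex.norm_real _).trans (Real.norm_eq_abs _)
    rw [h1] at this
    cases abs_cases (1 + d a) with
    | inl h => linarith [h.1]
    | inr h => linarith [h.1]
  have he1 : e b ≤ 1 := by
    have := aux_entry M hnorm (Sum.inr b) (Sum.inr b)
    rw [hMbb, norm_neg] at this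
    have h1 : ‖(2 : ℂ)⁻¹ * (1 + (e b : ℂ))‖ = 2⁻¹ * |1 + e b| := by
      rw [norm_mul]
      norm_num
      rw [show (1 : ℂ) + (e b : ℂ) = ((1 + e b : ℝ) : ℂ) by push_cast; ring]
      exact (Complex.norm_real _).trans (Real.norm_eq_abs _)
    rw [h1] at this
    cases abs_cases (1 + e b) with
    | inl h => linarith [h.1]
    | inr h => linarith [h.1]
  have hda : d a = 1 := by linarith
  -- the column sum bound
  have hsum := aux_sum M hnorm (Sum.inl a)
  have hsub : ({Sum.inl a, Sum.inr b} : Finset (Fin j ⊕ Fin k)) ⊆ Finset.univ :=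
    Finset.subset_univ _
  have hpair : ‖M (Sum.inl a) (Sum.inl a)‖ ^ 2 + ‖M (Sum.inr b) (Sum.inl a)‖ ^ 2
      ≤ ∑ q, ‖M q (Sum.inl a)‖ ^ 2 := by
    have := Finset.sum_le_sum_of_subset_of_nonneg hsub
      (fun i _ _ => sq_nonneg ‖M i (Sum.inl a)‖)
    rwa [Finset.sum_insert (by simp), Finset.sum_singleton] at this
  have hval1 : ‖M (Sum.inl a) (Sum.inl a)‖ = 1 := by
    rw [hMaa, hda]
    norm_num
  have hval2 : ‖M (Sum.inr b) (Sum.inl a)‖ = 2⁻¹ * ‖X a b‖ := by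
    rw [hMba, norm_mul, RCLike.norm_conj]
    norm_num
  rw [hval1, hval2] at hpair
  have hxpos : 0 < ‖X a b‖ := norm_pos_iff.mpr hx
  nlinarith
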